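/- Let J be a Lie-orthogonal operator on a finite-dimensional Lie algebra L over a field of characteristic zero. Then J maps the radical (maximal solvable ideal) of L into itself. -/

import Mathlib

theorem lieOrthogonal_maps_radical {k L : Type*} [Field k] [CharZero k]
    [LieRing L] [LieAlgebra k L] [FiniteDimensional k L]
    (J : L →ₗ[k] L) (hJ : ∀ x y : L, ⁅J x, J y⁆ = ⁅x, y⁆) :
    ∀ x ∈ LieAlgebra.radical k L, J x ∈ LieAlgebra.radical k L := by
  set R := LieAlgebra.radical k L with hR
  -- iterated Lie-orthogonality
  have hpow : ∀ (n : ℕ) (x y : L), ⁅(J ^ n) x, (J ^ n) y⁆ = ⁅x, y⁆ := by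
    intro n
    induction n with
    | zero => simp
    | succ n ih =>
      intro x y
      rw [pow_succ', Module.End.mul_apply, Module.End.mul_apply, hJ, ih]
  -- Fitting: kernel and range of a high power are codisjoint
  obtain ⟨n, hn1, hcod⟩ : ∃ n, 1 ≤ n ∧
      Codisjoint (LinearMap.ker (J ^ n)) (LinearMap.range (J ^ n)) := by
    obtain ⟨n₀, h⟩ := Filter.eventually_atTop.mp J.eventually_codisjoint_ker_pow_range_pow
    exact ⟨max n₀ 1, le_max_right _ _, h _ (le_max_left _ _)⟩
  -- elements of ker (J ^ n) are central
  have hcen : ∀ z ∈ LinearMap.ker (J ^ n), ∀ y : L, ⁅y, z⁆ = 0 := by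
    intro z hz y
    have h0 : ⁅z, y⁆ = 0 := by
      rw [← hpow n z y, LinearMap.mem_ker.mp hz, zero_lie]
    rw [← lie_skew, h0, neg_zero]
  -- key: for x in the radical, ⁅J x, z⁆ ∈ radical for all z
  have hkey : ∀ x ∈ R, ∀ z : L, ⁅J x, z⁆ ∈ R := by
    intro x hx z
    have hz : z ∈ LinearMap.ker (J ^ n) ⊔ LinearMap.range (J ^ n) := by
      rw [codisjoint_iff.mp hcod]; trivial
    obtain ⟨z₀, hz₀, z₁, hz₁, rfl⟩ := Submodule.mem_sup.mp hz
    obtain ⟨u, hu⟩ := hz₁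
    have hz₁' : J ((J ^ (n - 1)) u) = z₁ := by
      rw [← Module.End.mul_apply, ← pow_succ', Nat.sub_add_cancel hn1, hu]
    rw [lie_add, hcen z₀ hz₀ (J x), zero_add, ← hz₁', hJ, ← lie_skew]
    exact R.neg_mem (R.lie_mem hx)
  -- the ideal R + J(R)
  let S : Submodule k L := (R : Submodule k L) ⊔ Submodule.map J (R : Submodule k L)
  have hmemS : ∀ {x m : L}, m ∈ S → ⁅x, m⁆ ∈ S := by
    intro x m hm
    obtain ⟨r, hr, s', hs', rfl⟩ := Submodule.mem_sup.mp hm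
    obtain ⟨s, hs, rfl⟩ := hs'
    have h1 : ⁅x, r⁆ ∈ R := R.lie_mem hr
    have h2 : ⁅x, J s⁆ ∈ R := by
      rw [← lie_skew]
      exact R.neg_mem (hkey s hs x)
    refine Submodule.mem_sup_left ?_
    rw [lie_add]
    exact R.toSubmodule.add_mem h1 h2
  let I : LieIdeal k L := { S with lie_mem := fun {x m} hm => hmemS hm }
  have hIS : ∀ m : L, m ∈ I ↔ m ∈ S := fun m => Iff.rfl
  -- ⁅I, I⁆ ≤ R
  have hII : ⁅I, I⁆ ≤ R := by
    rw [LieSubmodule.lie_le_iff]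
    intro a ha b hb
    obtain ⟨r, hr, s', hs', rfl⟩ := Submodule.mem_sup.mp ((hIS a).mp ha)
    obtain ⟨s, hs, rfl⟩ := hs'
    rw [add_lie]
    refine R.add_mem ?_ (hkey s hs b)
    rw [← lie_skew]
    exact R.neg_mem (R.lie_mem hr)
  -- I is solvable
  have hRsolv : LieAlgebra.IsSolvable R := LieAlgebra.radicalIsSolvable k L
  obtain ⟨m, hm⟩ := LieAlgebra.IsSolvable.solvable k R
  have hmR : LieAlgebra.derivedSeriesOfIdeal k L m R = ⊥ :=
    (LieIdeal.derivedSeries_eq_bot_iff R m).mp hm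
  have hIsolv : LieAlgebra.IsSolvable I := by
    have h1 : LieAlgebra.derivedSeriesOfIdeal k L (m + 1) I
        = LieAlgebra.derivedSeriesOfIdeal k L m (LieAlgebra.derivedSeriesOfIdeal k L 1 I) := by
      rw [← LieAlgebra.derivedSeriesOfIdeal_add]
    have h2 : LieAlgebra.derivedSeriesOfIdeal k L 1 I ≤ R := by
      rwa [LieAlgebra.derivedSeriesOfIdeal_succ, LieAlgebra.derivedSeriesOfIdeal_zero]
    have h3 : LieAlgebra.derivedSeriesOfIdeal k L (m + 1) I = ⊥ := by
      refine le_bot_iff.mp ?_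
      calc LieAlgebra.derivedSeriesOfIdeal k L (m + 1) I
          = LieAlgebra.derivedSeriesOfIdeal k L m (LieAlgebra.derivedSeriesOfIdeal k L 1 I) := h1
        _ ≤ LieAlgebra.derivedSeriesOfIdeal k L m R :=
            LieAlgebra.derivedSeriesOfIdeal_mono h2 m
        _ = ⊥ := hmR
        _ ≤ ⊥ := le_rfl
    exact LieAlgebra.IsSolvable.mk ((LieIdeal.derivedSeries_eq_bot_iff I (m + 1)).mpr h3)
  -- conclude
  have hIle : I ≤ R := le_sSup hIsolv
  intro x hx
  have : J x ∈ S := Submodule.mem_sup_right ⟨x, hx, rfl⟩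
  exact hIle ((hIS (J x)).mpr this)
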